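/- Let Θ be a finite set of probability distributions on a finite outcome set 𝒳. Then the chi-squared capacity C(Θ) satisfies C(Θ) ≤ Σ_{x∈𝒳} max_{θ∈Θ} θ(x) − 1. -/
import Mathlib


open Finset

/-- The chi-squared capacity of a finite set of distributions `θ i` on a
finite outcome set `X` is bounded by `∑ x, max_i θ i x − 1`.  Since the capacity is the
supremum over priors `τ`, the claim is stated for every prior `τ`. -/
theorem capacity_le_sum_max_sub_one {X ι : Type*} [Fintype X] [Fintype ι] [Nonempty ι]
    (θ : ι → X → ℝ) (hθ0 : ∀ i x, 0 ≤ θ i x) (hθ1 : ∀ i, ∑ x, θ i x = 1)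
    (τ : ι → ℝ) (hτ0 : ∀ i, 0 ≤ τ i) (hτ1 : ∑ i, τ i = 1) :
    ∑ i, τ i * ∑ x, (∑ j, τ j * θ j x) * (θ i x / (∑ j, τ j * θ j x) - 1) ^ 2
      ≤ (∑ x, ⨆ i, θ i x) - 1 := by
  set q : X → ℝ := fun x => ∑ j, τ j * θ j x with hq
  have hq0 : ∀ x, 0 ≤ q x := fun x =>
    Finset.sum_nonneg fun j _ => mul_nonneg (hτ0 j) (hθ0 j x)
  have hqsum : ∑ x, q x = 1 := by
    simp only [hq]
    rw [Finset.sum_comm]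
    simp [← Finset.mul_sum, hθ1, hτ1]
  have hM : ∀ x i, θ i x ≤ ⨆ i, θ i x := fun x i =>
    le_ciSup (f := fun i => θ i x) (Set.Finite.bddAbove (Set.finite_range _)) i
  have key : ∀ x, ∑ i, τ i * (q x * (θ i x / q x - 1) ^ 2) ≤ (⨆ i, θ i x) - q x := by
    intro x
    rcases eq_or_lt_of_le (hq0 x) with h0 | hpos
    · rw [← h0]
      have : ∑ i, τ i * ((0:ℝ) * (θ i x / 0 - 1) ^ 2) = 0 := by simp
      rw [this]
      have : (0:ℝ) ≤ θ (Classical.arbitrary ι) x := hθ0 _ _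
      linarith [hM x (Classical.arbitrary ι)]
    · have hne : q x ≠ 0 := ne_of_gt hpos
      have expand : ∀ i, τ i * (q x * (θ i x / q x - 1) ^ 2)
          = τ i * θ i x ^ 2 / q x - 2 * (τ i * θ i x) + τ i * q x := by
        intro i; field_simp; ring
      rw [Finset.sum_congr rfl fun i _ => expand i]
      rw [Finset.sum_add_distrib, Finset.sum_sub_distrib, ← Finset.sum_div,
        ← Finset.mul_sum, ← Finset.sum_mul, hτ1, one_mul]
      have hqx : ∑ i, τ i * θ i x = q x := rfl
      rw [hqx]
      have hbound : ∑ i, τ i * θ i x ^ 2 ≤ (⨆ i, θ i x) * q x := by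
        rw [show (⨆ i, θ i x) * q x = ∑ i, (⨆ i, θ i x) * (τ i * θ i x) from Finset.mul_sum _ _ _]
        apply Finset.sum_le_sum
        intro i _
        nlinarith [mul_le_mul_of_nonneg_left (hM x i) (mul_nonneg (hτ0 i) (hθ0 i x))]
      have : (∑ i, τ i * θ i x ^ 2) / q x ≤ ⨆ i, θ i x := by
        rw [div_le_iff₀ hpos]; exact hbound
      linarith
  calc ∑ i, τ i * ∑ x, q x * (θ i x / q x - 1) ^ 2
      = ∑ x, ∑ i, τ i * (q x * (θ i x / q x - 1) ^ 2) := by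
        rw [Finset.sum_comm]
        exact Finset.sum_congr rfl fun i _ => Finset.mul_sum _ _ _
    _ ≤ ∑ x, ((⨆ i, θ i x) - q x) := Finset.sum_le_sum fun x _ => key x
    _ = (∑ x, ⨆ i, θ i x) - 1 := by rw [Finset.sum_sub_distrib, hqsum]
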